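/- For all integers n ≥ 10 and 1 ≤ m ≤ √10 · n^{5/2} and every probability distribution D in D_4(n,m), E_{C∼D}[κ(C)] ≤ 81·m⁴/(64·n⁶) + 729·m³/(32·n⁴). -/

import Mathlib

open scoped Classical

/-- A literal over `n` Boolean variables: a (variable, sign) pair. -/
abbrev Lit (n : ℕ) := Fin n × Bool

/-- A clause: a set of three literals whose three variables are pairwise distinct. -/
abbrev Clause (n : ℕ) :=
  {s : Finset (Lit n) // s.card = 3 ∧ (s.image Prod.fst).card = 3}

/-- A 3-SAT instance: a sequence of `m` clauses over `n` variables. -/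
abbrev SatInstance (n m : ℕ) := Fin m → Clause n

/-- The assignment `σ` makes at least one literal of clause `c` true. -/
def Satisfies {n : ℕ} (σ : Fin n → Bool) (c : Clause n) : Prop :=
  ∃ ℓ ∈ c.1, σ ℓ.1 = ℓ.2

/-- The instance `C` is satisfiable. -/
def SAT {n m : ℕ} (C : SatInstance n m) : Prop :=
  ∃ σ : Fin n → Bool, ∀ i, Satisfies σ (C i)

/-- Probability of the event `P` under the distribution (weight function) `D`. -/
noncomputable def pr {α : Type*} [Fintype α] (D : α → ℝ) (P : α → Prop) : ℝ :=
  ∑ a ∈ Finset.univ.filter P, D a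

/-- `D` is a probability distribution on the finite type `α`. -/
def IsDistribution {α : Type*} [Fintype α] (D : α → ℝ) : Prop :=
  (∀ a, 0 ≤ D a) ∧ ∑ a, D a = 1

/-- The clauses of a random instance drawn from `D` are `k`-wise independent with
uniform marginals: any `k` clauses at distinct positions are jointly uniform,
each over the `M = 8 * (n choose 3)` possible clauses.
`IsDistribution D ∧ KWiseUniform n m k D` says `D ∈ 𝔇_k(n,m)`. -/
def KWiseUniform (n m k : ℕ) (D : SatInstance n m → ℝ) : Prop :=
  ∀ idx : Fin k → Fin m, Function.Injective idx →
    ∀ t : Fin k → Clause n,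
      pr D (fun C => ∀ j, C (idx j) = t j) = (1 / (8 * (n.choose 3 : ℝ))) ^ k

/-- `ξ(C)`: the number of unordered pairs `{i, j}` with `i ≠ j` and `c_i = c_j`. -/
noncomputable def xi {n m : ℕ} (C : SatInstance n m) : ℕ :=
  (Finset.univ.filter fun p : Fin m × Fin m => p.1 < p.2 ∧ C p.1 = C p.2).card

/-- An edge index of the bipartite multigraph `G(C)`: a clause position together with the
literal serving as the right endpoint (the left endpoint is the remaining literal pair). -/
abbrev EdgeIdx (n m : ℕ) := Fin m × Lit n

/-- `e` is an actual edge of the multigraph `G(C)`. -/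
def isEdge {n m : ℕ} (C : SatInstance n m) (e : EdgeIdx n m) : Prop :=
  e.2 ∈ (C e.1).1

/-- The left endpoint (pair of literals) of the edge `e` of `G(C)`. -/
def leftV {n m : ℕ} (C : SatInstance n m) (e : EdgeIdx n m) : Finset (Lit n) :=
  (C e.1).1.erase e.2

/-- `s` is a `K_{2,2}`-edge-set of the multigraph `G(C)`: four edges of the form
`u–v, u–v', u'–v, u'–v'` with `u ≠ u'` and `v ≠ v'`. -/
def IsK22 {n m : ℕ} (C : SatInstance n m) (s : Finset (EdgeIdx n m)) : Prop :=
  s.card = 4 ∧ (∀ e ∈ s, isEdge C e) ∧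
  ∃ u u' : Finset (Lit n), ∃ v v' : Lit n, u ≠ u' ∧ v ≠ v' ∧
    s.image (fun e => (leftV C e, e.2)) = {(u, v), (u, v'), (u', v), (u', v')}

/-- `κ(C)`: the number of `K_{2,2}`-edge-sets of the multigraph `G(C)`. -/
noncomputable def kappa {n m : ℕ} (C : SatInstance n m) : ℕ :=
  (Finset.univ.filter fun s : Finset (EdgeIdx n m) => IsK22 C s).card

/-- Adjacency in the simple bipartite graph `G(C̃)` of a set `T` of distinct clauses:
the literal pair `u` is adjacent to the literal `v`. -/
def adjSet {n : ℕ} (T : Finset (Clause n)) (u : Finset (Lit n)) (v : Lit n) : Prop :=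
  v ∉ u ∧ ∃ c ∈ T, c.1 = insert v u

/-- `κ(C̃)` for a set `T` of pairwise distinct clauses: the number of `K_{2,2}` subgraphs of
the simple bipartite graph `G(C̃)`, computed as `Σ_{{v,v'}} binom(|B_{v,v'}|, 2)`. -/
noncomputable def kappaSet {n : ℕ} (T : Finset (Clause n)) : ℕ :=
  ∑ p ∈ (Finset.univ : Finset (Lit n)).powersetCard 2,
    ((Finset.univ.filter fun u : Finset (Lit n) => ∀ v ∈ p, adjSet T u v).card).choose 2

/-- `m̃(C)`: the number of pairwise distinct clauses occurring in `C`. -/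
noncomputable def distinctCount {n m : ℕ} (C : SatInstance n m) : ℕ :=
  (Finset.univ.image C).card

/-- The set of the three variables of a clause. -/
def clVars {n : ℕ} (c : Clause n) : Finset (Fin n) := c.1.image Prod.fst

/-- `f` lists (the indices of) hyperedges of the variable hypergraph of `C` forming a
Berge path: consecutive hyperedges share exactly one vertex, non-consecutive ones
are disjoint. -/
def IsBergePathOrder {n m : ℕ} (C : SatInstance n m) {k : ℕ} (f : Fin k → Fin m) : Prop :=
  Function.Injective f ∧
  (∀ i j : Fin k, (j : ℕ) = (i : ℕ) + 1 →
    (clVars (C (f i)) ∩ clVars (C (f j))).card = 1) ∧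
  (∀ i j : Fin k, i ≠ j → (j : ℕ) ≠ (i : ℕ) + 1 → (i : ℕ) ≠ (j : ℕ) + 1 →
    Disjoint (clVars (C (f i))) (clVars (C (f j))))

/-- `j` follows `i` cyclically in `Fin ℓ`. -/
def CycConsec (ℓ : ℕ) (i j : Fin ℓ) : Prop := (j : ℕ) = ((i : ℕ) + 1) % ℓ

/-- `f` lists (the indices of) hyperedges of the variable hypergraph of `C` forming a
Berge cycle (of length `ℓ ≥ 3`): cyclically consecutive hyperedges share exactly one
vertex, non-consecutive ones are disjoint. -/
def IsBergeCycleOrder {n m : ℕ} (C : SatInstance n m) {ℓ : ℕ} (f : Fin ℓ → Fin m) : Prop :=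
  Function.Injective f ∧
  (∀ i j : Fin ℓ, CycConsec ℓ i j →
    (clVars (C (f i)) ∩ clVars (C (f j))).card = 1) ∧
  (∀ i j : Fin ℓ, i ≠ j → ¬ CycConsec ℓ i j → ¬ CycConsec ℓ j i →
    Disjoint (clVars (C (f i))) (clVars (C (f j))))

/-- The number of `k`-element sets of hyperedge indices of the variable hypergraph of `C`
that form a Berge path of length `k`. -/
noncomputable def bergePathSetCount (n m k : ℕ) (C : SatInstance n m) : ℕ :=
  (Finset.univ.filter fun s : Finset (Fin m) =>
    s.card = k ∧ ∃ f : Fin k → Fin m, (∀ i, f i ∈ s) ∧ IsBergePathOrder C f).card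

/-- The number of `ℓ`-element sets of hyperedge indices of the variable hypergraph of `C`
that form a Berge cycle of length `ℓ`. -/
noncomputable def bergeCycleSetCount (n m ℓ : ℕ) (C : SatInstance n m) : ℕ :=
  (Finset.univ.filter fun s : Finset (Fin m) =>
    s.card = ℓ ∧ ∃ f : Fin ℓ → Fin m, (∀ i, f i ∈ s) ∧ IsBergeCycleOrder C f).card

open Finset

abbrev Wit (n m : ℕ) :=
  (Fin m × Fin m × Fin m × Fin m) × ((Lit n × Lit n) × (Finset (Lit n) × Finset (Lit n)))

def GoodW {n m : ℕ} (w : Wit n m) : Prop :=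
  w.1.1 ≠ w.1.2.1 ∧ w.1.1 ≠ w.1.2.2.1 ∧ w.1.1 ≠ w.1.2.2.2 ∧
  w.1.2.1 ≠ w.1.2.2.1 ∧ w.1.2.1 ≠ w.1.2.2.2 ∧ w.1.2.2.1 ≠ w.1.2.2.2 ∧
  w.2.1.1 ≠ w.2.1.2 ∧ w.2.2.1 ≠ w.2.2.2 ∧
  w.2.2.1.card = 2 ∧ w.2.2.2.card = 2 ∧
  (w.2.2.1.image Prod.fst).card = 2 ∧ (w.2.2.2.image Prod.fst).card = 2 ∧
  w.2.1.1.1 ∉ w.2.2.1.image Prod.fst ∧ w.2.1.1.1 ∉ w.2.2.2.image Prod.fst ∧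
  w.2.1.2.1 ∉ w.2.2.1.image Prod.fst ∧ w.2.1.2.1 ∉ w.2.2.2.image Prod.fst

def MatchW {n m : ℕ} (C : SatInstance n m) (w : Wit n m) : Prop :=
  (C w.1.1).1 = insert w.2.1.1 w.2.2.1 ∧ (C w.1.2.1).1 = insert w.2.1.1 w.2.2.2 ∧
  (C w.1.2.2.1).1 = insert w.2.1.2 w.2.2.1 ∧ (C w.1.2.2.2).1 = insert w.2.1.2 w.2.2.2

def sOf {n m : ℕ} (w : Wit n m) : Finset (EdgeIdx n m) :=
  {(w.1.1, w.2.1.1), (w.1.2.1, w.2.1.1), (w.1.2.2.1, w.2.1.2), (w.1.2.2.2, w.2.1.2)}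

lemma isK22_witness {n m : ℕ} {C : SatInstance n m} {s : Finset (EdgeIdx n m)}
    (h : IsK22 C s) :
    ∃ i1 i2 i3 i4 : Fin m, ∃ v v' : Lit n, ∃ u u' : Finset (Lit n),
      GoodW (((i1, i2, i3, i4), ((v, v'), (u, u'))) : Wit n m) ∧
      MatchW C ((i1, i2, i3, i4), ((v, v'), (u, u'))) ∧
      s = {(i1, v), (i2, v), (i3, v'), (i4, v')} := by

  obtain ⟨hc4, hedge, u, u', v, v', huu, hvv, himg⟩ := h
  have hget : ∀ p ∈ ({(u, v), (u, v'), (u', v), (u', v')} :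
      Finset (Finset (Lit n) × Lit n)), ∃ e ∈ s, (leftV C e, e.2) = p := by
    intro p hp
    rw [← himg] at hp
    exact Finset.mem_image.mp hp
  obtain ⟨e1, he1s, he1⟩ := hget (u, v) (by simp)
  obtain ⟨e3, he3s, he3⟩ := hget (u, v') (by simp)
  obtain ⟨e2, he2s, he2⟩ := hget (u', v) (by simp)
  obtain ⟨e4, he4s, he4⟩ := hget (u', v') (by simp)
  have he12 : e1.2 = v := congrArg Prod.snd he1
  have he22 : e2.2 = v := congrArg Prod.snd he2
  have he32 : e3.2 = v' := congrArg Prod.snd he3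
  have he42 : e4.2 = v' := congrArg Prod.snd he4
  have hl1 : (C e1.1).1.erase v = u := by
    have := congrArg Prod.fst he1; rw [leftV, he12] at this; exact this
  have hl2 : (C e2.1).1.erase v = u' := by
    have := congrArg Prod.fst he2; rw [leftV, he22] at this; exact this
  have hl3 : (C e3.1).1.erase v' = u := by
    have := congrArg Prod.fst he3; rw [leftV, he32] at this; exact this
  have hl4 : (C e4.1).1.erase v' = u' := by
    have := congrArg Prod.fst he4; rw [leftV, he42] at this; exact this
  have hm1 : v ∈ (C e1.1).1 := by have := hedge e1 he1s; rwa [isEdge, he12] at this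
  have hm2 : v ∈ (C e2.1).1 := by have := hedge e2 he2s; rwa [isEdge, he22] at this
  have hm3 : v' ∈ (C e3.1).1 := by have := hedge e3 he3s; rwa [isEdge, he32] at this
  have hm4 : v' ∈ (C e4.1).1 := by have := hedge e4 he4s; rwa [isEdge, he42] at this
  have hC1 : (C e1.1).1 = insert v u := by rw [← hl1, Finset.insert_erase hm1]
  have hC2 : (C e2.1).1 = insert v u' := by rw [← hl2, Finset.insert_erase hm2]
  have hC3 : (C e3.1).1 = insert v' u := by rw [← hl3, Finset.insert_erase hm3]
  have hC4 : (C e4.1).1 = insert v' u' := by rw [← hl4, Finset.insert_erase hm4]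
  have hvu : v ∉ u := by rw [← hl1]; exact Finset.notMem_erase _ _
  have hvu' : v ∉ u' := by rw [← hl2]; exact Finset.notMem_erase _ _
  have hv'u : v' ∉ u := by rw [← hl3]; exact Finset.notMem_erase _ _
  have hv'u' : v' ∉ u' := by rw [← hl4]; exact Finset.notMem_erase _ _
  have hcu : u.card = 2 := by
    rw [← hl1, Finset.card_erase_of_mem hm1, (C e1.1).2.1]
  have hcu' : u'.card = 2 := by
    rw [← hl2, Finset.card_erase_of_mem hm2, (C e2.1).2.1]
  -- image facts
  have key : ∀ (a : Lit n) (x : Finset (Lit n)), x.card = 2 →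
      ((insert a x).image Prod.fst).card = 3 →
      (x.image Prod.fst).card = 2 ∧ a.1 ∉ x.image Prod.fst := by
    intro a x hx h3
    rw [Finset.image_insert] at h3
    have hle : (x.image Prod.fst).card ≤ 2 := hx ▸ Finset.card_image_le
    by_cases hmem : a.1 ∈ x.image Prod.fst
    · rw [Finset.insert_eq_self.mpr hmem] at h3; omega
    · rw [Finset.card_insert_of_notMem hmem] at h3
      exact ⟨by omega, hmem⟩
  have k1 := key v u hcu (by rw [← hC1]; exact (C e1.1).2.2)
  have k2 := key v u' hcu' (by rw [← hC2]; exact (C e2.1).2.2)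
  have k3 := key v' u hcu (by rw [← hC3]; exact (C e3.1).2.2)
  have k4 := key v' u' hcu' (by rw [← hC4]; exact (C e4.1).2.2)
  -- distinctness of edges
  have pair_ne : ∀ {a b : Finset (Lit n) × Lit n}, (a.1 ≠ b.1 ∨ a.2 ≠ b.2) → a ≠ b := by
    intro a b hab hEq; cases hab with
    | inl h => exact h (congrArg Prod.fst hEq)
    | inr h => exact h (congrArg Prod.snd hEq)
  have hne12 : e1 ≠ e2 := by
    intro h; apply huu
    have : ((u, v) : Finset (Lit n) × Lit n) = (u', v) := by rw [← he1, ← he2, h]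
    exact congrArg Prod.fst this
  have hne34 : e3 ≠ e4 := by
    intro h; apply huu
    have : ((u, v') : Finset (Lit n) × Lit n) = (u', v') := by rw [← he3, ← he4, h]
    exact congrArg Prod.fst this
  have hne13 : e1 ≠ e3 := by
    intro h; apply hvv
    have : ((u, v) : Finset (Lit n) × Lit n) = (u, v') := by rw [← he1, ← he3, h]
    exact congrArg Prod.snd this
  have hne14 : e1 ≠ e4 := by
    intro h; apply hvv
    have : ((u, v) : Finset (Lit n) × Lit n) = (u', v') := by rw [← he1, ← he4, h]
    exact congrArg Prod.snd this
  have hne23 : e2 ≠ e3 := by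
    intro h; apply hvv
    have : ((u', v) : Finset (Lit n) × Lit n) = (u, v') := by rw [← he2, ← he3, h]
    exact congrArg Prod.snd this
  have hne24 : e2 ≠ e4 := by
    intro h; apply hvv
    have : ((u', v) : Finset (Lit n) × Lit n) = (u', v') := by rw [← he2, ← he4, h]
    exact congrArg Prod.snd this
  -- distinctness of positions
  have hi12 : e1.1 ≠ e2.1 := by
    intro h; exact hne12 (Prod.ext h (he12.trans he22.symm))
  have hi34 : e3.1 ≠ e4.1 := by
    intro h; exact hne34 (Prod.ext h (he32.trans he42.symm))
  have hi13 : e1.1 ≠ e3.1 := by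
    intro h
    have : insert v u = insert v' u := by rw [← hC1, ← hC3, h]
    have hv : v ∈ insert v' u := this ▸ Finset.mem_insert_self v u
    rcases Finset.mem_insert.mp hv with h' | h'
    · exact hvv h'
    · exact hvu h'
  have hi24 : e2.1 ≠ e4.1 := by
    intro h
    have : insert v u' = insert v' u' := by rw [← hC2, ← hC4, h]
    have hv : v ∈ insert v' u' := this ▸ Finset.mem_insert_self v u'
    rcases Finset.mem_insert.mp hv with h' | h'
    · exact hvv h'
    · exact hvu' h'
  have hi14 : e1.1 ≠ e4.1 := by
    intro h
    have : insert v u = insert v' u' := by rw [← hC1, ← hC4, h]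
    have hv : v ∈ insert v' u' := this ▸ Finset.mem_insert_self v u
    rcases Finset.mem_insert.mp hv with h' | h'
    · exact hvv h'
    · exact hvu' h'
  have hi23 : e2.1 ≠ e3.1 := by
    intro h
    have : insert v u' = insert v' u := by rw [← hC2, ← hC3, h]
    have hv : v ∈ insert v' u := this ▸ Finset.mem_insert_self v u'
    rcases Finset.mem_insert.mp hv with h' | h'
    · exact hvv h'
    · exact hvu h'
  -- s equals the explicit 4-set
  have hsub : ({e1, e2, e3, e4} : Finset (EdgeIdx n m)) ⊆ s := by
    intro x hx
    simp only [Finset.mem_insert, Finset.mem_singleton] at hx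
    rcases hx with rfl | rfl | rfl | rfl <;> assumption
  have hcard4 : ({e1, e2, e3, e4} : Finset (EdgeIdx n m)).card = 4 := by
    rw [Finset.card_insert_of_notMem (by simp [hne12, hne13, hne14]),
      Finset.card_insert_of_notMem (by simp [hne23, hne24]),
      Finset.card_insert_of_notMem (by simp [hne34]), Finset.card_singleton]
  have hseq : s = ({e1, e2, e3, e4} : Finset (EdgeIdx n m)) :=
    (Finset.eq_of_subset_of_card_le hsub (by omega)).symm
  refine ⟨e1.1, e2.1, e3.1, e4.1, v, v', u, u',
    ⟨hi12, hi13, hi14, hi23, hi24, hi34, hvv, huu, hcu, hcu',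
      k1.1, k2.1, k1.2, k2.2, k3.2, k4.2⟩,
    ⟨hC1, hC2, hC3, hC4⟩, ?_⟩
  rw [hseq, show ((e1.1, v) : EdgeIdx n m) = e1 from Prod.ext rfl he12.symm,
    show ((e2.1, v) : EdgeIdx n m) = e2 from Prod.ext rfl he22.symm,
    show ((e3.1, v') : EdgeIdx n m) = e3 from Prod.ext rfl he32.symm,
    show ((e4.1, v') : EdgeIdx n m) = e4 from Prod.ext rfl he42.symm]


lemma sOf_eq_helper {n m : ℕ} (i1 i2 i3 i4 : Fin m) (v v' : Lit n)
    (uu : Finset (Lit n) × Finset (Lit n)) :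
    sOf (((i2, i1, i4, i3), ((v, v'), uu)) : Wit n m)
      = {(i1, v), (i2, v), (i3, v'), (i4, v')} ∧
    sOf (((i3, i4, i1, i2), ((v', v), uu)) : Wit n m)
      = {(i1, v), (i2, v), (i3, v'), (i4, v')} ∧
    sOf (((i4, i3, i2, i1), ((v', v), uu)) : Wit n m)
      = {(i1, v), (i2, v), (i3, v'), (i4, v')} := by
  refine ⟨?_, ?_, ?_⟩ <;> · ext x; simp [sOf]; tauto

lemma four_kappa_le {n m : ℕ} (C : SatInstance n m) :
    4 * kappa C ≤ (Finset.univ.filter fun w : Wit n m => GoodW w ∧ MatchW C w).card := by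
  classical
  set A := Finset.univ.filter fun w : Wit n m => GoodW w ∧ MatchW C w with hA
  set K := Finset.univ.filter fun s : Finset (EdgeIdx n m) => IsK22 C s with hK
  have hfib : ∀ s ∈ K, 4 ≤ (A.filter fun w => sOf w = s).card := by
    intro s hs
    have hk : IsK22 C s := (Finset.mem_filter.mp hs).2
    obtain ⟨i1, i2, i3, i4, v, v', u, u', hG, hM, hseq⟩ := isK22_witness hk
    obtain ⟨h12, h13, h14, h23, h24, h34, hvv, huu, hcu, hcu', hju, hju',
      hvu, hvu', hv'u, hv'u'⟩ := hG
    obtain ⟨hM1, hM2, hM3, hM4⟩ := hM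
    set w0 : Wit n m := ((i1, i2, i3, i4), ((v, v'), (u, u'))) with hw0
    set w1 : Wit n m := ((i2, i1, i4, i3), ((v, v'), (u', u))) with hw1
    set w2 : Wit n m := ((i3, i4, i1, i2), ((v', v), (u, u'))) with hw2
    set w3 : Wit n m := ((i4, i3, i2, i1), ((v', v), (u', u))) with hw3
    have hs0 : sOf w0 = s := by rw [hseq]; rfl
    have hs123 := sOf_eq_helper i1 i2 i3 i4 v v'
    have hs1 : sOf w1 = s := by rw [hseq]; exact (hs123 (u', u)).1
    have hs2 : sOf w2 = s := by rw [hseq]; exact (hs123 (u, u')).2.1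
    have hs3 : sOf w3 = s := by rw [hseq]; exact (hs123 (u', u)).2.2
    have hmem : ∀ w ∈ ({w0, w1, w2, w3} : Finset (Wit n m)),
        w ∈ A.filter fun w => sOf w = s := by
      intro w hw
      simp only [Finset.mem_insert, Finset.mem_singleton] at hw
      rcases hw with rfl | rfl | rfl | rfl <;>
        refine Finset.mem_filter.mpr ⟨Finset.mem_filter.mpr ⟨Finset.mem_univ _, ?_, ?_⟩, ?_⟩
      · exact ⟨h12, h13, h14, h23, h24, h34, hvv, huu, hcu, hcu', hju, hju',
          hvu, hvu', hv'u, hv'u'⟩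
      · exact ⟨hM1, hM2, hM3, hM4⟩
      · exact hs0
      · exact ⟨h12.symm, h24, h23, h14, h13, h34.symm, hvv, huu.symm, hcu', hcu,
          hju', hju, hvu', hvu, hv'u', hv'u⟩
      · exact ⟨hM2, hM1, hM4, hM3⟩
      · exact hs1
      · exact ⟨h34, h13.symm, h23.symm, h14.symm, h24.symm, h12, hvv.symm, huu,
          hcu, hcu', hju, hju', hv'u, hv'u', hvu, hvu'⟩
      · exact ⟨hM3, hM4, hM1, hM2⟩
      · exact hs2
      · exact ⟨h34.symm, h24.symm, h14.symm, h23.symm, h13.symm, h12.symm, hvv.symm,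
          huu.symm, hcu', hcu, hju', hju, hv'u', hv'u, hvu', hvu⟩
      · exact ⟨hM4, hM3, hM2, hM1⟩
      · exact hs3
    have hne01 : w0 ≠ w1 := fun h => huu (congrArg (fun w : Wit n m => w.2.2.1) h)
    have hne02 : w0 ≠ w2 := fun h => hvv (congrArg (fun w : Wit n m => w.2.1.1) h)
    have hne03 : w0 ≠ w3 := fun h => hvv (congrArg (fun w : Wit n m => w.2.1.1) h)
    have hne12' : w1 ≠ w2 := fun h => huu (congrArg (fun w : Wit n m => w.2.2.2) h)
    have hne13' : w1 ≠ w3 := fun h => hvv (congrArg (fun w : Wit n m => w.2.1.1) h)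
    have hne23' : w2 ≠ w3 := fun h => huu (congrArg (fun w : Wit n m => w.2.2.1) h)
    calc (4 : ℕ) = ({w0, w1, w2, w3} : Finset (Wit n m)).card := by
          rw [Finset.card_insert_of_notMem (by simp [hne01, hne02, hne03]),
            Finset.card_insert_of_notMem (by simp [hne12', hne13']),
            Finset.card_insert_of_notMem (by simp [hne23']), Finset.card_singleton]
      _ ≤ _ := Finset.card_le_card hmem
  have hsum : ∑ s ∈ K, (A.filter fun w => sOf w = s).card
      = (A.filter fun w => sOf w ∈ K).card := by
    rw [Finset.card_eq_sum_card_fiberwise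
      (s := A.filter fun w => sOf w ∈ K) (f := sOf) (t := K) (fun w hw => (Finset.mem_filter.mp hw).2)]
    refine Finset.sum_congr rfl fun b hb => congrArg Finset.card ?_
    ext w
    simp only [Finset.mem_filter]
    constructor
    · rintro ⟨h1, h2⟩; exact ⟨⟨h1, h2 ▸ hb⟩, h2⟩
    · rintro ⟨⟨h1, _⟩, h2⟩; exact ⟨h1, h2⟩
  calc 4 * kappa C = ∑ _s ∈ K, 4 := by
        rw [Finset.sum_const, smul_eq_mul, show kappa C = K.card from rfl]; ring
    _ ≤ ∑ s ∈ K, (A.filter fun w => sOf w = s).card := Finset.sum_le_sum hfib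
    _ = (A.filter fun w => sOf w ∈ K).card := hsum
    _ ≤ A.card := Finset.card_le_card (Finset.filter_subset _ _)

lemma card_X_le {n : ℕ} (hn : 3 ≤ n) (v : Lit n) :
    (Finset.univ.filter fun u : Finset (Lit n) =>
      u.card = 2 ∧ (u.image Prod.fst).card = 2 ∧ v.1 ∉ u.image Prod.fst).card
      ≤ 2 * ((n - 1) * (n - 2)) := by
  classical
  set X := Finset.univ.filter fun u : Finset (Lit n) =>
      u.card = 2 ∧ (u.image Prod.fst).card = 2 ∧ v.1 ∉ u.image Prod.fst with hX
  set Y : Finset (Lit n) := (Finset.univ.erase v.1) ×ˢ (Finset.univ : Finset Bool) with hY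
  have hYcard : Y.card = (n - 1) * 2 := by
    rw [hY, Finset.card_product, Finset.card_erase_of_mem (Finset.mem_univ _)]
    simp
  have hmemY : ∀ a : Lit n, a.1 ≠ v.1 → a ∈ Y := fun a h =>
    Finset.mem_product.mpr ⟨Finset.mem_erase.mpr ⟨h, Finset.mem_univ _⟩, Finset.mem_univ _⟩
  have hY1 : ∀ a ∈ Y, a.1 ≠ v.1 := fun a h =>
    (Finset.mem_erase.mp (Finset.mem_product.mp h).1).1
  set Z := (Y ×ˢ Y).filter (fun p : Lit n × Lit n => p.1.1 ≠ p.2.1) with hZ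
  have hZle : Z.card ≤ ((n - 1) * 2) * ((n - 1) * 2 - 2) := by
    rw [Finset.card_eq_sum_card_fiberwise (f := Prod.fst) (t := Y)
      (fun p hp => (Finset.mem_product.mp (Finset.mem_filter.mp hp).1).1)]
    refine le_trans (Finset.sum_le_card_nsmul Y _ ((n - 1) * 2 - 2) ?_) ?_
    · intro a ha
      have hsub : ∀ p ∈ Z.filter (fun p => p.1 = a),
          p.2 ∈ (Y.erase (a.1, false)).erase (a.1, true) := by
        intro p hp
        obtain ⟨hpZ, hpa⟩ := Finset.mem_filter.mp hp
        obtain ⟨hpY, hne⟩ := Finset.mem_filter.mp hpZ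
        have h2Y : p.2 ∈ Y := (Finset.mem_product.mp hpY).2
        have hne' : p.2.1 ≠ a.1 := by rw [← hpa]; exact fun h => hne h.symm
        refine Finset.mem_erase.mpr ⟨?_, Finset.mem_erase.mpr ⟨?_, h2Y⟩⟩
        · intro h; exact hne' (by rw [h])
        · intro h; exact hne' (by rw [h])
      have hinj : Set.InjOn (fun p : Lit n × Lit n => p.2)
          (Z.filter (fun p => p.1 = a)) := by
        intro p hp q hq hpq
        have hpa := (Finset.mem_filter.mp hp).2
        have hqa := (Finset.mem_filter.mp hq).2
        exact Prod.ext (hpa.trans hqa.symm) hpq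
      calc (Z.filter (fun p => p.1 = a)).card
          ≤ ((Y.erase (a.1, false)).erase (a.1, true)).card :=
            Finset.card_le_card_of_injOn _ hsub hinj
        _ = (n - 1) * 2 - 2 := by
            have haY : a.1 ≠ v.1 := hY1 a ha
            rw [Finset.card_erase_of_mem
                (Finset.mem_erase.mpr ⟨by simp, hmemY (a.1, true) haY⟩),
              Finset.card_erase_of_mem (hmemY (a.1, false) haY), hYcard]
            omega
    · rw [smul_eq_mul, hYcard]
  have h2X : 2 * X.card ≤ Z.card := by
    rw [Finset.card_eq_sum_card_fiberwise
      (f := fun p : Lit n × Lit n => ({p.1, p.2} : Finset (Lit n))) (t := X) ?_]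
    · calc 2 * X.card = ∑ _u ∈ X, 2 := by rw [Finset.sum_const, smul_eq_mul, mul_comm]
        _ ≤ _ := by
          refine Finset.sum_le_sum fun u hu => ?_
          obtain ⟨-, hcu, hju, hvu⟩ := Finset.mem_filter.mp hu
          obtain ⟨a, b, hab, rfl⟩ := Finset.card_eq_two.mp hcu
          have hab1 : a.1 ≠ b.1 := by
            intro h
            have : ({a, b} : Finset (Lit n)).image Prod.fst = {a.1} := by
              rw [Finset.image_insert, Finset.image_singleton, h]; simp
            rw [this] at hju; simp at hju
          have hav : a.1 ≠ v.1 := by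
            intro h
            exact hvu (h ▸ Finset.mem_image_of_mem _ (Finset.mem_insert_self a {b}))
          have hbv : b.1 ≠ v.1 := by
            intro h
            exact hvu (h ▸ Finset.mem_image_of_mem _ (by simp))
          have hsub : ({(a, b), (b, a)} : Finset (Lit n × Lit n))
              ⊆ Z.filter (fun p => ({p.1, p.2} : Finset (Lit n)) = {a, b}) := by
            intro p hp
            simp only [Finset.mem_insert, Finset.mem_singleton] at hp
            rcases hp with rfl | rfl <;>
              refine Finset.mem_filter.mpr ⟨Finset.mem_filter.mpr
                ⟨Finset.mem_product.mpr ⟨hmemY _ ?_, hmemY _ ?_⟩, ?_⟩, ?_⟩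
            · exact hav
            · exact hbv
            · exact hab1
            · rfl
            · exact hbv
            · exact hav
            · exact fun h => hab1 h.symm
            · exact Finset.pair_comm b a
          calc 2 = ({(a, b), (b, a)} : Finset (Lit n × Lit n)).card :=
                (Finset.card_pair (fun h => hab (congrArg Prod.fst h))).symm
            _ ≤ _ := Finset.card_le_card hsub
    · intro p hp
      obtain ⟨hpY, hne⟩ := Finset.mem_filter.mp hp
      obtain ⟨h1Y, h2Y⟩ := Finset.mem_product.mp hpY
      have hpne : p.1 ≠ p.2 := fun h => hne (congrArg Prod.fst h)
      refine Finset.mem_filter.mpr ⟨Finset.mem_univ _, Finset.card_pair hpne, ?_, ?_⟩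
      · rw [Finset.image_insert, Finset.image_singleton]
        exact Finset.card_pair hne
      · rw [Finset.image_insert, Finset.image_singleton]
        simp only [Finset.mem_insert, Finset.mem_singleton]
        rintro (h | h)
        · exact hY1 _ h1Y h.symm
        · exact hY1 _ h2Y h.symm
  have hfin : ((n - 1) * 2) * ((n - 1) * 2 - 2) = 2 * (2 * ((n - 1) * (n - 2))) := by
    have h1 : (n - 1) * 2 - 2 = 2 * (n - 2) := by omega
    rw [h1]; ring
  omega

lemma card_W_le {n m : ℕ} (hn : 3 ≤ n) :
    (Finset.univ.filter (GoodW : Wit n m → Prop)).card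
      ≤ (m ^ 4 * (2 * n) ^ 2) * (2 * ((n - 1) * (n - 2))) ^ 2 := by
  classical
  rw [Finset.card_eq_sum_card_fiberwise (f := fun w : Wit n m => (w.1, w.2.1))
    (t := (Finset.univ : Finset ((Fin m × Fin m × Fin m × Fin m) × (Lit n × Lit n))))
    (fun _ _ => Finset.mem_univ _)]
  refine le_trans (Finset.sum_le_card_nsmul _ _ ((2 * ((n - 1) * (n - 2))) ^ 2) ?_) ?_
  · intro q _
    set v : Lit n := q.2.1 with hv
    set Xv := Finset.univ.filter (fun u : Finset (Lit n) =>
      u.card = 2 ∧ (u.image Prod.fst).card = 2 ∧ v.1 ∉ u.image Prod.fst) with hXv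
    have hmaps : ∀ w ∈ (Finset.univ.filter (GoodW : Wit n m → Prop)).filter
        (fun w => (w.1, w.2.1) = q), w.2.2 ∈ Xv ×ˢ Xv := by
      intro w hw
      obtain ⟨hwG, hwq⟩ := Finset.mem_filter.mp hw
      have hG := (Finset.mem_filter.mp hwG).2
      obtain ⟨-, -, -, -, -, -, -, -, hcu, hcu', hju, hju', hvu, hvu', -, -⟩ := hG
      have hvq : w.2.1.1 = v := congrArg Prod.fst (congrArg Prod.snd hwq)
      rw [hvq] at hvu hvu'
      exact Finset.mem_product.mpr
        ⟨Finset.mem_filter.mpr ⟨Finset.mem_univ _, hcu, hju, hvu⟩,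
         Finset.mem_filter.mpr ⟨Finset.mem_univ _, hcu', hju', hvu'⟩⟩
    have hinj : Set.InjOn (fun w : Wit n m => w.2.2)
        ((Finset.univ.filter (GoodW : Wit n m → Prop)).filter
          (fun w => (w.1, w.2.1) = q)) := by
      intro w hw w' hw' hww
      have h1 := (Finset.mem_filter.mp hw).2
      have h2 := (Finset.mem_filter.mp hw').2
      have hq : (w.1, w.2.1) = (w'.1, w'.2.1) := h1.trans h2.symm
      rw [Prod.mk.injEq] at hq
      obtain ⟨ha, hb⟩ := hq
      have hc : w.2.2 = w'.2.2 := hww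
      calc w = (w.1, w.2.1, w.2.2) := rfl
        _ = (w'.1, w'.2.1, w'.2.2) := by rw [ha, hb, hc]
        _ = w' := rfl
    calc ((Finset.univ.filter (GoodW : Wit n m → Prop)).filter
          (fun w => (w.1, w.2.1) = q)).card
        ≤ (Xv ×ˢ Xv).card := Finset.card_le_card_of_injOn _ hmaps hinj
      _ = Xv.card * Xv.card := Finset.card_product _ _
      _ ≤ (2 * ((n - 1) * (n - 2))) ^ 2 := by
          rw [pow_two]; exact Nat.mul_le_mul (card_X_le hn v) (card_X_le hn v)
  · rw [smul_eq_mul, Finset.card_univ]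
    apply Nat.mul_le_mul_right
    simp only [Fintype.card_prod, Fintype.card_fin, Fintype.card_bool]
    ring_nf
    omega

lemma mk_clause {n : ℕ} (a : Lit n) (x : Finset (Lit n)) (h1 : x.card = 2)
    (h2 : (x.image Prod.fst).card = 2) (h3 : a.1 ∉ x.image Prod.fst) :
    (insert a x).card = 3 ∧ ((insert a x).image Prod.fst).card = 3 := by
  have hax : a ∉ x := fun h => h3 (Finset.mem_image_of_mem _ h)
  constructor
  · rw [Finset.card_insert_of_notMem hax, h1]
  · rw [Finset.image_insert, Finset.card_insert_of_notMem h3, h2]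

lemma pr_match {n m : ℕ} (D : SatInstance n m → ℝ) (h4 : KWiseUniform n m 4 D)
    {w : Wit n m} (hw : GoodW w) :
    pr D (fun C => MatchW C w) = (1 / (8 * (n.choose 3 : ℝ))) ^ 4 := by
  obtain ⟨⟨i1, i2, i3, i4⟩, ⟨⟨v, v'⟩, ⟨u, u'⟩⟩⟩ := w
  obtain ⟨h12, h13, h14, h23, h24, h34, hvv, huu, hcu, hcu', hju, hju',
    hvu, hvu', hv'u, hv'u'⟩ := hw
  set t1 : Clause n := ⟨insert v u, mk_clause v u hcu hju hvu⟩ with ht1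
  set t2 : Clause n := ⟨insert v u', mk_clause v u' hcu' hju' hvu'⟩ with ht2
  set t3 : Clause n := ⟨insert v' u, mk_clause v' u hcu hju hv'u⟩ with ht3
  set t4 : Clause n := ⟨insert v' u', mk_clause v' u' hcu' hju' hv'u'⟩ with ht4
  have hinj : Function.Injective ![i1, i2, i3, i4] := by
    intro a b hab
    fin_cases a <;> fin_cases b <;> simp_all <;>
      first
        | rfl
        | (exfalso; simp_all)
  have key := h4 ![i1, i2, i3, i4] hinj ![t1, t2, t3, t4]
  rw [← key]
  unfold pr
  congr 1
  ext C
  simp only [Finset.mem_filter, Finset.mem_univ, true_and]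
  constructor
  · rintro ⟨hM1, hM2, hM3, hM4⟩ j
    fin_cases j
    · exact Subtype.ext hM1
    · exact Subtype.ext hM2
    · exact Subtype.ext hM3
    · exact Subtype.ext hM4
  · intro hall
    exact ⟨congrArg Subtype.val (hall 0), congrArg Subtype.val (hall 1),
      congrArg Subtype.val (hall 2), congrArg Subtype.val (hall 3)⟩
lemma poly_ineq (N : ℝ) (hN : 10 ≤ N) :
    10 * N * (N ^ 4 - (N - 1) ^ 2 * (N - 2) ^ 2) ^ 2
      ≤ 324 * (N - 1) ^ 4 * (N - 2) ^ 4 := by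
  have ht : (0 : ℝ) ≤ N - 10 := by linarith
  nlinarith [ht, mul_nonneg ht ht, pow_nonneg ht 3, pow_nonneg ht 4,
    pow_nonneg ht 5, pow_nonneg ht 6, pow_nonneg ht 7, pow_nonneg ht 8]

lemma key_ineq (x N : ℝ) (hN : 10 ≤ N) (hx1 : 1 ≤ x) (hx : x ^ 2 ≤ 10 * N ^ 5) :
    x * (N ^ 4 - (N - 1) ^ 2 * (N - 2) ^ 2) ≤ 18 * (N ^ 2 * (N - 1) ^ 2 * (N - 2) ^ 2) := by
  have hN0 : (0 : ℝ) < N := by linarith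
  have ha : (0 : ℝ) < N - 1 := by linarith
  have hb : (0 : ℝ) < N - 2 := by linarith
  set K := N ^ 4 - (N - 1) ^ 2 * (N - 2) ^ 2 with hK
  set S := N ^ 2 * (N - 1) ^ 2 * (N - 2) ^ 2 with hS
  have hKnn : 0 ≤ K := by
    have h1 : (N - 1) ^ 2 ≤ N ^ 2 := by nlinarith
    have h2 : (N - 2) ^ 2 ≤ N ^ 2 := by nlinarith
    nlinarith
  have hSpos : 0 < S := by positivity
  have hpoly := poly_ineq N hN
  have hsq : (x * K) ^ 2 ≤ (18 * S) ^ 2 := by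
    have h1 : (x * K) ^ 2 = x ^ 2 * K ^ 2 := by ring
    have h2 : x ^ 2 * K ^ 2 ≤ 10 * N ^ 5 * K ^ 2 :=
      mul_le_mul_of_nonneg_right hx (sq_nonneg K)
    have h3 : 10 * N ^ 5 * K ^ 2 = N ^ 4 * (10 * N * K ^ 2) := by ring
    have h4 : N ^ 4 * (10 * N * K ^ 2) ≤ N ^ 4 * (324 * (N - 1) ^ 4 * (N - 2) ^ 4) :=
      mul_le_mul_of_nonneg_left hpoly (by positivity)
    have h5 : N ^ 4 * (324 * (N - 1) ^ 4 * (N - 2) ^ 4) = (18 * S) ^ 2 := by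
      rw [hS]; ring
    linarith
  have hxK : 0 ≤ x * K := mul_nonneg (by linarith) hKnn
  nlinarith [hsq, hSpos, hxK]

lemma real_final (x N : ℝ) (hN : 10 ≤ N) (hx1 : 1 ≤ x) (hx : x ^ 2 ≤ 10 * N ^ 5) :
    (x ^ 4 * (2 * N) ^ 2) * (2 * ((N - 1) * (N - 2))) ^ 2
        * (1 / (8 * (N * (N - 1) * (N - 2) / 6))) ^ 4 / 4
      ≤ 81 * x ^ 4 / (64 * N ^ 6) + 729 * x ^ 3 / (32 * N ^ 4) := by
  have hN0 : (0 : ℝ) < N := by linarith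
  have ha : (0 : ℝ) < N - 1 := by linarith
  have hb : (0 : ℝ) < N - 2 := by linarith
  have hL : (x ^ 4 * (2 * N) ^ 2) * (2 * ((N - 1) * (N - 2))) ^ 2
      * (1 / (8 * (N * (N - 1) * (N - 2) / 6))) ^ 4 / 4
      = 81 * x ^ 4 / (64 * (N ^ 2 * (N - 1) ^ 2 * (N - 2) ^ 2)) := by
    field_simp
    ring
  rw [hL]
  have key := key_ineq x N hN hx1 hx
  rw [div_add_div _ _ (by positivity) (by positivity),
    div_le_div_iff₀ (by positivity) (by positivity)]
  nlinarith [mul_le_mul_of_nonneg_left key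
      (by positivity : (0 : ℝ) ≤ 165888 * x ^ 3 * N ^ 6)]

lemma choose3_cast {n : ℕ} (hn : 3 ≤ n) :
    ((n.choose 3 : ℕ) : ℝ) = (n : ℝ) * ((n : ℝ) - 1) * ((n : ℝ) - 2) / 6 := by
  have hd : n.descFactorial 3 = 6 * n.choose 3 := by
    rw [Nat.descFactorial_eq_factorial_mul_choose]; norm_num [Nat.factorial]
  have hd2 : n.descFactorial 3 = (n - 2) * ((n - 1) * n) := by
    simp [Nat.descFactorial_succ, Nat.descFactorial_zero]
  have h6 : 6 * n.choose 3 = (n - 2) * ((n - 1) * n) := by rw [← hd, hd2]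
  have hc := congrArg (fun k : ℕ => (k : ℝ)) h6
  push_cast [Nat.cast_sub (by omega : 1 ≤ n), Nat.cast_sub (by omega : 2 ≤ n)] at hc
  rw [eq_div_iff (by norm_num : (6 : ℝ) ≠ 0)]
  linear_combination hc

/-- For all `n ≥ 10`, `1 ≤ m ≤ √10·n^{5/2}` and every `D ∈ 𝔇₄(n,m)`,
`E_{C∼D}[κ(C)] ≤ 81·m⁴/(64·n⁶) + 729·m³/(32·n⁴)`. -/
theorem stmt10 (n m : ℕ) (hn : 10 ≤ n) (hm1 : 1 ≤ m)
    (hm : (m : ℝ) ≤ Real.sqrt 10 * (n : ℝ) ^ ((5 : ℝ) / 2))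
    (D : SatInstance n m → ℝ) (hD : IsDistribution D) (h4 : KWiseUniform n m 4 D) :
    ∑ C : SatInstance n m, D C * (kappa C : ℝ)
      ≤ 81 * (m : ℝ) ^ 4 / (64 * (n : ℝ) ^ 6) + 729 * (m : ℝ) ^ 3 / (32 * (n : ℝ) ^ 4) := by
  classical
  have hn3 : 3 ≤ n := by omega
  have hN10 : (10 : ℝ) ≤ (n : ℝ) := by exact_mod_cast hn
  have hN0 : (0 : ℝ) < (n : ℝ) := by linarith
  have hm1R : (1 : ℝ) ≤ (m : ℝ) := by exact_mod_cast hm1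
  have hx2 : (m : ℝ) ^ 2 ≤ 10 * (n : ℝ) ^ 5 := by
    have hXX : (n : ℝ) ^ ((5 : ℝ) / 2) * (n : ℝ) ^ ((5 : ℝ) / 2) = (n : ℝ) ^ (5 : ℕ) := by
      rw [← Real.rpow_natCast (n : ℝ) 5, ← Real.rpow_add hN0]
      norm_num
    have h1 : (m : ℝ) * (m : ℝ)
        ≤ (Real.sqrt 10 * (n : ℝ) ^ ((5 : ℝ) / 2)) * (Real.sqrt 10 * (n : ℝ) ^ ((5 : ℝ) / 2)) :=
      mul_self_le_mul_self (Nat.cast_nonneg m) hm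
    calc (m : ℝ) ^ 2 = (m : ℝ) * (m : ℝ) := sq (m : ℝ)
      _ ≤ _ := h1
      _ = (Real.sqrt 10 * Real.sqrt 10) *
            ((n : ℝ) ^ ((5 : ℝ) / 2) * (n : ℝ) ^ ((5 : ℝ) / 2)) := by ring
      _ = 10 * (n : ℝ) ^ 5 := by
          rw [Real.mul_self_sqrt (by norm_num : (0 : ℝ) ≤ 10), hXX]
  set WF := Finset.univ.filter (GoodW : Wit n m → Prop) with hWF
  have step2 : ∑ C : SatInstance n m,
      D C * (((Finset.univ.filter fun w : Wit n m => GoodW w ∧ MatchW C w).card : ℝ))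
      = (WF.card : ℝ) * (1 / (8 * (n.choose 3 : ℝ))) ^ 4 := by
    have h1 : ∀ C : SatInstance n m,
        D C * (((Finset.univ.filter fun w : Wit n m => GoodW w ∧ MatchW C w).card : ℝ))
        = ∑ w ∈ WF, (if MatchW C w then D C else 0) := by
      intro C
      rw [← Finset.filter_filter, ← hWF]
      rw [Finset.card_filter]
      push_cast
      rw [Finset.mul_sum]
      refine Finset.sum_congr rfl fun w _ => ?_
      split_ifs <;> simp
    calc ∑ C : SatInstance n m,
        D C * (((Finset.univ.filter fun w : Wit n m => GoodW w ∧ MatchW C w).card : ℝ))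
        = ∑ C : SatInstance n m, ∑ w ∈ WF, (if MatchW C w then D C else 0) :=
          Finset.sum_congr rfl fun C _ => h1 C
      _ = ∑ w ∈ WF, ∑ C : SatInstance n m, (if MatchW C w then D C else 0) :=
          Finset.sum_comm
      _ = ∑ _w ∈ WF, (1 / (8 * (n.choose 3 : ℝ))) ^ 4 := by
          refine Finset.sum_congr rfl fun w hw => ?_
          rw [← Finset.sum_filter]
          exact pr_match D h4 (Finset.mem_filter.mp hw).2
      _ = (WF.card : ℝ) * (1 / (8 * (n.choose 3 : ℝ))) ^ 4 := by
          rw [Finset.sum_const, nsmul_eq_mul]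
  have hMnn : (0 : ℝ) ≤ (1 / (8 * (n.choose 3 : ℝ))) ^ 4 := by positivity
  have hchoose := choose3_cast hn3
  calc ∑ C : SatInstance n m, D C * (kappa C : ℝ)
      ≤ ∑ C : SatInstance n m,
          D C * (((Finset.univ.filter fun w : Wit n m => GoodW w ∧ MatchW C w).card : ℝ) / 4) := by
        refine Finset.sum_le_sum fun C _ => mul_le_mul_of_nonneg_left ?_ (hD.1 C)
        rw [le_div_iff₀ (by norm_num : (0 : ℝ) < 4)]
        have := four_kappa_le C
        calc (kappa C : ℝ) * 4 = ((4 * kappa C : ℕ) : ℝ) := by push_cast; ring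
          _ ≤ _ := by exact_mod_cast this
    _ = (∑ C : SatInstance n m,
          D C * (((Finset.univ.filter fun w : Wit n m => GoodW w ∧ MatchW C w).card : ℝ))) / 4 := by
        rw [Finset.sum_div]
        exact Finset.sum_congr rfl fun C _ => by ring
    _ = (WF.card : ℝ) * (1 / (8 * (n.choose 3 : ℝ))) ^ 4 / 4 := by rw [step2]
    _ ≤ (((m ^ 4 * (2 * n) ^ 2) * (2 * ((n - 1) * (n - 2))) ^ 2 : ℕ) : ℝ)
          * (1 / (8 * (n.choose 3 : ℝ))) ^ 4 / 4 := by
        gcongr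
        exact_mod_cast card_W_le hn3
    _ = ((m : ℝ) ^ 4 * (2 * (n : ℝ)) ^ 2) * (2 * (((n : ℝ) - 1) * ((n : ℝ) - 2))) ^ 2
          * (1 / (8 * ((n : ℝ) * ((n : ℝ) - 1) * ((n : ℝ) - 2) / 6))) ^ 4 / 4 := by
        rw [hchoose]
        push_cast [Nat.cast_sub (by omega : 1 ≤ n), Nat.cast_sub (by omega : 2 ≤ n)]
        ring
    _ ≤ _ := real_final (m : ℝ) (n : ℝ) hN10 hm1R hx2
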